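/- T is (A,(m,n))-isosymmetric if and only if for every real s and every positive integer k, (e^{isT})*^k I_A^m(T) (e^{isT})^k = Σ_{h=0}^{n−1} ((−isk)^h / h!) Ω_A^{m,h}(T), where I_A^m(T) = Σ_{j=0}^m (-1)^{m−j} binom(m,j) (T*)^j A T^j. -/

import Mathlib

open ContinuousLinearMap NormedSpace

set_option synthInstance.maxHeartbeats 1000000
set_option maxHeartbeats 2000000

noncomputable def SOp {H : Type*} [NormedAddCommGroup H] [InnerProductSpace ℂ H]
    [CompleteSpace H] (A T : H →L[ℂ] H) (n : ℕ) : H →L[ℂ] H :=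
  ∑ k ∈ Finset.range (n + 1),
    ((-1 : ℂ) ^ (n - k) * (n.choose k : ℂ)) • (((adjoint T) ^ k) ∘L A ∘L (T ^ (n - k)))

noncomputable def OmegaS {H : Type*} [NormedAddCommGroup H] [InnerProductSpace ℂ H]
    [CompleteSpace H] (A T : H →L[ℂ] H) (m n : ℕ) : H →L[ℂ] H :=
  ∑ k ∈ Finset.range (m + 1),
    ((-1 : ℂ) ^ (m - k) * (m.choose k : ℂ)) • (((adjoint T) ^ k) ∘L SOp A T n ∘L (T ^ k))

noncomputable def IOp {H : Type*} [NormedAddCommGroup H] [InnerProductSpace ℂ H]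
    [CompleteSpace H] (A T : H →L[ℂ] H) (m : ℕ) : H →L[ℂ] H :=
  ∑ j ∈ Finset.range (m + 1),
    ((-1 : ℂ) ^ (m - j) * (m.choose j : ℂ)) • (((adjoint T) ^ j) ∘L A ∘L (T ^ j))


section Aux

variable {H : Type*} [NormedAddCommGroup H] [InnerProductSpace ℂ H] [CompleteSpace H]

noncomputable def lmulOp (X : H →L[ℂ] H) : (H →L[ℂ] H) →L[ℂ] (H →L[ℂ] H) :=
  ContinuousLinearMap.mul ℂ (H →L[ℂ] H) X

noncomputable def rmulOp (X : H →L[ℂ] H) : (H →L[ℂ] H) →L[ℂ] (H →L[ℂ] H) :=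
  (ContinuousLinearMap.mul ℂ (H →L[ℂ] H)).flip X

@[simp] lemma lmulOp_apply (X B : H →L[ℂ] H) : lmulOp X B = X * B := rfl
@[simp] lemma rmulOp_apply (X B : H →L[ℂ] H) : rmulOp X B = B * X := rfl

lemma lmulOp_smul (c : ℂ) (X : H →L[ℂ] H) : lmulOp (c • X) = c • lmulOp X := by
  ext B; simp [smul_mul_assoc]

lemma rmulOp_smul (c : ℂ) (X : H →L[ℂ] H) : rmulOp (c • X) = c • rmulOp X := by
  ext B; simp [mul_smul_comm]

lemma lmulOp_pow (X : H →L[ℂ] H) (k : ℕ) : (lmulOp X) ^ k = lmulOp (X ^ k) := by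
  induction k with
  | zero => ext B; simp
  | succ k ih =>
    refine ContinuousLinearMap.ext fun B => ?_
    rw [pow_succ]
    simp only [ContinuousLinearMap.mul_apply, ih, lmulOp_apply]
    rw [← mul_assoc, ← pow_succ]

lemma rmulOp_pow (X : H →L[ℂ] H) (k : ℕ) : (rmulOp X) ^ k = rmulOp (X ^ k) := by
  induction k with
  | zero => ext B; simp
  | succ k ih =>
    refine ContinuousLinearMap.ext fun B => ?_
    rw [pow_succ]
    simp only [ContinuousLinearMap.mul_apply, ih, rmulOp_apply]
    rw [mul_assoc, ← pow_succ']

lemma commute_lr (X Y : H →L[ℂ] H) : Commute (lmulOp X) (rmulOp Y) := by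
  apply ContinuousLinearMap.ext
  intro B
  simp [ContinuousLinearMap.mul_apply, mul_assoc]


noncomputable def DOp (T : H →L[ℂ] H) : (H →L[ℂ] H) →L[ℂ] (H →L[ℂ] H) :=
  lmulOp (adjoint T) - rmulOp T

lemma DOp_apply (T B : H →L[ℂ] H) : DOp T B = adjoint T * B - B * T := rfl

lemma neg_rmul_pow_apply (T B : H →L[ℂ] H) (j : ℕ) :
    ((-(rmulOp T)) ^ j) B = (-1 : ℂ) ^ j • (B * T ^ j) := by
  induction j generalizing B with
  | zero => simp
  | succ j ih =>
    rw [pow_succ', ContinuousLinearMap.mul_apply, ih, map_smul]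
    have h2 : (-(rmulOp T)) (B * T ^ j) = -(B * T ^ j * T) := by simp
    rw [h2, show B * T ^ j * T = B * T ^ (j + 1) by rw [mul_assoc, ← pow_succ],
      smul_neg, ← neg_smul, ← neg_one_mul, mul_comm (-1 : ℂ) _, ← pow_succ]

lemma DOp_pow_apply (T B : H →L[ℂ] H) (h : ℕ) :
    ((DOp T) ^ h) B = ∑ k ∈ Finset.range (h + 1),
      ((-1 : ℂ) ^ (h - k) * (h.choose k : ℂ)) • ((adjoint T ^ k) * B * (T ^ (h - k))) := by
  have hc : Commute (lmulOp (adjoint T)) (-(rmulOp T)) := (commute_lr (adjoint T) T).neg_right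
  have hD : DOp T = lmulOp (adjoint T) + -(rmulOp T) := by
    rw [DOp, sub_eq_add_neg]
  rw [hD, hc.add_pow, ContinuousLinearMap.sum_apply]
  refine Finset.sum_congr rfl fun k hk => ?_
  rw [ContinuousLinearMap.mul_apply, ContinuousLinearMap.mul_apply,
    ContinuousLinearMap.natCast_apply, map_nsmul, map_nsmul, neg_rmul_pow_apply,
    lmulOp_pow, map_smul, lmulOp_apply, ← Nat.cast_smul_eq_nsmul ℂ, smul_smul,
    mul_comm ((-1 : ℂ) ^ (h - k)) ((h.choose k : ℂ)),
    mul_assoc (adjoint T ^ k) B (T ^ (h - k))]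


lemma SOp_eq (A T : H →L[ℂ] H) (h : ℕ) : ((DOp T) ^ h) A = SOp A T h := by
  rw [DOp_pow_apply, SOp]
  refine Finset.sum_congr rfl fun k _ => ?_
  rw [mul_assoc]
  rfl

lemma DOp_conj (T B : H →L[ℂ] H) (j : ℕ) :
    DOp T (adjoint T ^ j * B * T ^ j) = adjoint T ^ j * (DOp T B) * T ^ j := by
  simp only [DOp_apply, mul_sub, sub_mul]
  congr 1
  · rw [← mul_assoc, ← mul_assoc, ← pow_succ', ← mul_assoc, ← pow_succ]
  · rw [mul_assoc, mul_assoc, ← pow_succ, mul_assoc, mul_assoc, ← pow_succ']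

lemma DOp_pow_conj (T B : H →L[ℂ] H) (j h : ℕ) :
    ((DOp T) ^ h) (adjoint T ^ j * B * T ^ j) = adjoint T ^ j * (((DOp T) ^ h) B) * T ^ j := by
  induction h with
  | zero => simp
  | succ h ih => rw [pow_succ', ContinuousLinearMap.mul_apply, ih, DOp_conj,
      ContinuousLinearMap.mul_apply]

lemma Omega_eq (A T : H →L[ℂ] H) (m h : ℕ) :
    OmegaS A T m h = ((DOp T) ^ h) (IOp A T m) := by
  rw [IOp, map_sum, OmegaS]
  refine Finset.sum_congr rfl fun j _ => ?_
  rw [map_smul]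
  congr 1
  have e1 : (adjoint T ^ j) ∘L A ∘L (T ^ j) = adjoint T ^ j * A * T ^ j := by
    rw [mul_assoc]; rfl
  rw [e1, DOp_pow_conj, SOp_eq, mul_assoc]
  rfl


lemma exp_lmulOp (X : H →L[ℂ] H) : exp (lmulOp X) = lmulOp (exp X) := by
  have hs : Summable fun n : ℕ => (n.factorial⁻¹ : ℂ) • X ^ n := expSeries_summable' X
  simp only [exp_eq_tsum ℂ]
  rw [show lmulOp (∑' n : ℕ, (n.factorial⁻¹ : ℂ) • X ^ n)
      = (ContinuousLinearMap.mul ℂ (H →L[ℂ] H)) (∑' n : ℕ, (n.factorial⁻¹ : ℂ) • X ^ n) from rfl,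
    (ContinuousLinearMap.mul ℂ (H →L[ℂ] H)).map_tsum hs]
  refine tsum_congr fun n => ?_
  rw [map_smul, lmulOp_pow]
  rfl

lemma exp_rmulOp (X : H →L[ℂ] H) : exp (rmulOp X) = rmulOp (exp X) := by
  have hs : Summable fun n : ℕ => (n.factorial⁻¹ : ℂ) • X ^ n := expSeries_summable' X
  simp only [exp_eq_tsum ℂ]
  rw [show rmulOp (∑' n : ℕ, (n.factorial⁻¹ : ℂ) • X ^ n)
      = (ContinuousLinearMap.mul ℂ (H →L[ℂ] H)).flip (∑' n : ℕ, (n.factorial⁻¹ : ℂ) • X ^ n)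
      from rfl,
    ((ContinuousLinearMap.mul ℂ (H →L[ℂ] H)).flip).map_tsum hs]
  refine tsum_congr fun n => ?_
  rw [map_smul, rmulOp_pow]
  rfl

lemma expConjD (T B : H →L[ℂ] H) (w : ℂ) :
    exp ((-w) • adjoint T) * B * exp (w • T) = exp ((-w) • DOp T) B := by
  let +nondep : NormedAlgebra ℚ ((H →L[ℂ] H) →L[ℂ] (H →L[ℂ] H)) := .restrictScalars ℚ ℂ _
  have h1 : (-w) • DOp T = lmulOp ((-w) • adjoint T) + rmulOp (w • T) := by
    rw [lmulOp_smul, rmulOp_smul, DOp, smul_sub, sub_eq_add_neg, ← neg_smul, neg_neg]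
  rw [h1, exp_add_of_commute (commute_lr _ _), ContinuousLinearMap.mul_apply,
    exp_lmulOp, exp_rmulOp, lmulOp_apply, rmulOp_apply, mul_assoc]

lemma smul_DOp_pow_apply (T B : H →L[ℂ] H) (z : ℂ) (n : ℕ) :
    ((z • DOp T) ^ n) B = z ^ n • (((DOp T) ^ n) B) := by
  induction n generalizing B with
  | zero => simp
  | succ n ih =>
    rw [pow_succ', ContinuousLinearMap.mul_apply, ih, ContinuousLinearMap.smul_apply,
      map_smul, smul_smul, pow_succ', mul_comm z (z ^ n), pow_succ',
      ContinuousLinearMap.mul_apply]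

lemma exp_DOp_apply (T B : H →L[ℂ] H) (z : ℂ) :
    exp (z • DOp T) B = ∑' h : ℕ, ((z ^ h / (h.factorial : ℂ)) • (((DOp T) ^ h) B)) := by
  have hs : Summable fun n : ℕ => (n.factorial⁻¹ : ℂ) • (z • DOp T) ^ n :=
    expSeries_summable' _
  have e0 : exp (z • DOp T) B
      = (ContinuousLinearMap.apply ℂ (H →L[ℂ] H) B) (exp (z • DOp T)) := rfl
  rw [e0]
  simp only [exp_eq_tsum ℂ]
  rw [(ContinuousLinearMap.apply ℂ (H →L[ℂ] H) B).map_tsum hs]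
  refine tsum_congr fun n => ?_
  rw [map_smul]
  have : (ContinuousLinearMap.apply ℂ (H →L[ℂ] H) B) ((z • DOp T) ^ n)
      = ((z • DOp T) ^ n) B := rfl
  rw [this, smul_DOp_pow_apply, smul_smul, div_eq_mul_inv, mul_comm]


omit [CompleteSpace H] in
lemma comp3 (a b c : H →L[ℂ] H) : a ∘L b ∘L c = a * b * c := by rw [mul_assoc]; rfl

lemma adj_exp (T : H →L[ℂ] H) (s : ℝ) :
    adjoint (exp ((Complex.I * (s : ℂ)) • T))
      = exp ((-(Complex.I * (s : ℂ))) • adjoint T) := by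
  rw [← ContinuousLinearMap.star_eq_adjoint, ← ContinuousLinearMap.star_eq_adjoint, star_exp,
    star_smul]
  congr 1
  simp [Complex.conj_I, Complex.conj_ofReal, neg_mul]

lemma exp_pow_eq (X : H →L[ℂ] H) (c : ℂ) (k : ℕ) :
    (exp (c • X)) ^ k = exp ((c * k) • X) := by
  let +nondep : NormedAlgebra ℚ (H →L[ℂ] H) := .restrictScalars ℚ ℂ _
  rw [← exp_nsmul, ← Nat.cast_smul_eq_nsmul ℂ, smul_smul, mul_comm (k : ℂ) c]

lemma lhs_eq (A T : H →L[ℂ] H) (m : ℕ) (s : ℝ) (k : ℕ) :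
    ((adjoint (exp ((Complex.I * (s : ℂ)) • T))) ^ k) ∘L IOp A T m ∘L
        ((exp ((Complex.I * (s : ℂ)) • T)) ^ k)
      = exp ((-(Complex.I * (s : ℂ) * (k : ℂ))) • DOp T) (IOp A T m) := by
  rw [adj_exp, exp_pow_eq, exp_pow_eq, comp3]
  have e1 : -(Complex.I * (s : ℂ)) * (k : ℂ) = -(Complex.I * (s : ℂ) * (k : ℂ)) := by ring
  rw [e1, expConjD]

end Aux

theorem isosymmetric_iff_exp_expansion {H : Type*} [NormedAddCommGroup H]
    [InnerProductSpace ℂ H] [CompleteSpace H] (A T : H →L[ℂ] H) (hA : A.IsPositive)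
    (m n : ℕ) (hn : 1 ≤ n) :
    OmegaS A T m n = 0 ↔
      ∀ (s : ℝ) (k : ℕ), 1 ≤ k →
        ((adjoint (NormedSpace.exp ((Complex.I * (s : ℂ)) • T))) ^ k) ∘L IOp A T m ∘L
            ((NormedSpace.exp ((Complex.I * (s : ℂ)) • T)) ^ k) =
          ∑ h ∈ Finset.range n,
            (((-Complex.I * (s : ℂ) * (k : ℂ)) ^ h / (h.factorial : ℂ))) • OmegaS A T m h := by
  constructor
  · intro h0 s k _
    have hD : ((DOp T) ^ n) (IOp A T m) = 0 := by rw [← Omega_eq]; exact h0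
    have hzero : ∀ h : ℕ, n ≤ h → ((DOp T) ^ h) (IOp A T m) = 0 := by
      intro h hh
      have e : (DOp T) ^ h = (DOp T) ^ (h - n) * (DOp T) ^ n := by
        rw [← pow_add]; congr 1; omega
      rw [e, ContinuousLinearMap.mul_apply, hD, map_zero]
    rw [lhs_eq, exp_DOp_apply,
      tsum_eq_sum (s := Finset.range n)
        (fun h hh => by rw [hzero h (by simpa using hh), smul_zero])]
    refine Finset.sum_congr rfl fun h _ => ?_
    rw [Omega_eq]
    congr 1
    ring
  · intro hyp
    set M : (H →L[ℂ] H) →L[ℂ] (H →L[ℂ] H) := (-Complex.I) • DOp T with hM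
    have hsM : ∀ s : ℝ, s • M = (-(Complex.I * (s : ℂ) * 1)) • DOp T := by
      intro s
      rw [hM, ← algebraMap_smul ℂ s ((-Complex.I) • DOp T), smul_smul, Complex.coe_algebraMap]
      congr 1
      ring
    have key : ∀ s : ℝ, exp (s • M) (IOp A T m)
        = ∑ h ∈ Finset.range n,
            s ^ h • (((-Complex.I) ^ h / (h.factorial : ℂ)) • (((DOp T) ^ h) (IOp A T m))) := by
      intro s
      have h1 := hyp s 1 le_rfl
      rw [lhs_eq] at h1
      rw [hsM s, Nat.cast_one] at *
      rw [h1]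
      refine Finset.sum_congr rfl fun h _ => ?_
      rw [Omega_eq, ← algebraMap_smul ℂ (s ^ h)
        (((-Complex.I) ^ h / (h.factorial : ℂ)) • (((DOp T) ^ h) (IOp A T m))),
        Complex.coe_algebraMap, smul_smul]
      congr 1
      push_cast
      ring
    have claim : ∀ j : ℕ, ∃ a : ℕ → (H →L[ℂ] H), ∀ s : ℝ,
        exp (s • M) ((M ^ j) (IOp A T m)) = ∑ h ∈ Finset.range (n - j), s ^ h • a h := by
      intro j
      induction j with
      | zero =>
        refine ⟨fun h => ((-Complex.I) ^ h / (h.factorial : ℂ)) • (((DOp T) ^ h) (IOp A T m)),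
          fun s => ?_⟩
        simpa using key s
      | succ j ih =>
        obtain ⟨a, ha⟩ := ih
        refine ⟨fun h => ((h : ℝ) + 1) • a (h + 1), fun s => ?_⟩
        have hder : HasDerivAt (fun u : ℝ => exp (u • M) ((M ^ j) (IOp A T m)))
            (exp (s • M) ((M ^ (j + 1)) (IOp A T m))) s := by
          have h0 : HasDerivAt (fun u : ℝ => exp (u • M)) (M * exp (s • M)) s :=
            hasDerivAt_exp_smul_const' M s
          have h2 := ((ContinuousLinearMap.apply ℂ (H →L[ℂ] H)
              ((M ^ j) (IOp A T m))).restrictScalars ℝ).hasFDerivAt.comp_hasDerivAt s h0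
          have hcom : Commute M (exp (s • M)) := by
            rw [hsM s]
            refine Commute.exp_right ?_
            apply ContinuousLinearMap.ext
            intro B
            simp [hM, ContinuousLinearMap.mul_apply, map_smul, smul_smul, mul_comm]
          have e3 : (M * exp (s • M)) ((M ^ j) (IOp A T m))
              = exp (s • M) ((M ^ (j + 1)) (IOp A T m)) := by
            rw [hcom.eq, ContinuousLinearMap.mul_apply,
              ← ContinuousLinearMap.mul_apply M (M ^ j), ← pow_succ']
          rw [← e3]
          exact h2
        have hpoly : HasDerivAt (fun u : ℝ => ∑ h ∈ Finset.range (n - j), u ^ h • a h)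
            (∑ h ∈ Finset.range (n - j), ((h : ℝ) * s ^ (h - 1)) • a h) s :=
          HasDerivAt.fun_sum fun h _ => (hasDerivAt_pow h s).smul_const (a h)
        have hfe : (fun u : ℝ => exp (u • M) ((M ^ j) (IOp A T m)))
            = fun u : ℝ => ∑ h ∈ Finset.range (n - j), u ^ h • a h := funext ha
        rw [hfe] at hder
        have heq := hder.unique hpoly
        rw [heq]
        rcases Nat.eq_zero_or_pos (n - j) with h0 | h0
        · rw [h0, show n - (j + 1) = 0 by omega]
          simp
        · obtain ⟨N, hN⟩ : ∃ N, n - j = N + 1 := ⟨n - j - 1, by omega⟩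
          rw [hN, show n - (j + 1) = N by omega, Finset.sum_range_succ']
          simp only [Nat.cast_zero, zero_mul, zero_smul, add_zero]
          refine Finset.sum_congr rfl fun h _ => ?_
          rw [Nat.add_sub_cancel, smul_smul, mul_comm]
          push_cast
          rfl
    obtain ⟨a, ha⟩ := claim n
    have h00 := ha 0
    rw [Nat.sub_self, show (0 : ℝ) • M = 0 from zero_smul ℝ M, exp_zero] at h00
    simp only [Finset.range_zero, Finset.sum_empty, ContinuousLinearMap.one_apply] at h00
    rw [hM] at h00
    have hz : (-Complex.I) ^ n • (((DOp T) ^ n) (IOp A T m)) = 0 := by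
      rw [← smul_DOp_pow_apply]
      exact h00
    rw [Omega_eq]
    have hni : ((-Complex.I) ^ n : ℂ) ≠ 0 := pow_ne_zero _ (neg_ne_zero.mpr Complex.I_ne_zero)
    exact (smul_eq_zero.mp hz).resolve_left hni
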